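/- Let $r_1, r_2, n, k$ be positive integers with $k \le \min\{r_1, r_2\}$, and let $Z_i \in \mathbb{R}^{r_i \times n}$ satisfy $Z_i Z_i^\top = n I_{r_i}$ for both $i \in \{1,2\}$. Let $W_1 \Sigma W_2^\top$ be any $k$-truncated singular value decomposition of $Z_1 Z_2^\top$ (so $W_i \in \mathbb{R}^{r_i \times k}$ has orthonormal columns whose columns are leading left/right singular vectors and $\Sigma$ is the diagonal matrix of the $k$ largest singular values). Then $(B_1, B_2) = (W_1^\top, W_2^\top)$ minimizes $\|B_1 Z_1 - B_2 Z_2\|_F^2$ over all pairs $(B_1, B_2)$ with $B_i \in \mathbb{R}^{k \times r_i}$ and $B_i B_i^\top = I_k$ for both $i \in \{1,2\}$. -/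

import Mathlib

open Matrix

/-- The squared Frobenius norm of a real matrix. -/
noncomputable def frobSq {m n : ℕ} (M : Matrix (Fin m) (Fin n) ℝ) : ℝ :=
  ∑ i, ∑ j, (M i j) ^ 2

/-- The `l`-th largest singular value of a real `m × n` matrix (`l = 0` gives the largest),
defined as the square root of the `l`-th largest eigenvalue of `MᴴM`. -/
noncomputable def svDesc {m n : ℕ} (M : Matrix (Fin m) (Fin n) ℝ) (l : Fin n) : ℝ :=
  Real.sqrt ((Matrix.isHermitian_conjTranspose_mul_self M).eigenvalues
    (Tuple.sort (Matrix.isHermitian_conjTranspose_mul_self M).eigenvalues l.rev))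

section Helpers
open Finset


lemma csqrt {ι : Type*} [Fintype ι] (f g : ι → ℝ) :
    ∑ i, f i * g i ≤ Real.sqrt (∑ i, f i ^ 2) * Real.sqrt (∑ i, g i ^ 2) := by
  calc ∑ i, f i * g i ≤ |∑ i, f i * g i| := le_abs_self _
    _ = Real.sqrt ((∑ i, f i * g i) ^ 2) := (Real.sqrt_sq_eq_abs _).symm
    _ ≤ Real.sqrt ((∑ i, f i ^ 2) * ∑ i, g i ^ 2) :=
        Real.sqrt_le_sqrt (Finset.sum_mul_sq_le_sq_mul_sq _ _ _)
    _ = _ := Real.sqrt_mul (by positivity) _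

lemma contract_sq {k r : ℕ} (B : Matrix (Fin k) (Fin r) ℝ) (hB : B * Bᵀ = 1)
    (v : Fin r → ℝ) : ∑ i, (∑ x, B i x * v x) ^ 2 ≤ ∑ x, v x ^ 2 := by
  have hBB : ∀ i i' : Fin k, ∑ x, B i x * B i' x = if i = i' then (1:ℝ) else 0 := by
    intro i i'
    have := congrFun (congrFun hB i) i'
    simpa [Matrix.mul_apply, Matrix.one_apply] using this
  set y : Fin k → ℝ := fun i => ∑ x, B i x * v x with hy
  set q : ℝ := ∑ i, y i ^ 2 with hq
  have hq0 : 0 ≤ q := Finset.sum_nonneg fun _ _ => sq_nonneg _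
  have hSv0 : 0 ≤ ∑ x, v x ^ 2 := Finset.sum_nonneg fun _ _ => sq_nonneg _
  have key : ∑ x, (∑ i, B i x * y i) ^ 2 = q := by
    have expand : ∀ x : Fin r, (∑ i, B i x * y i) ^ 2
        = ∑ i, ∑ i', (B i x * y i) * (B i' x * y i') := fun x => by
      rw [sq, Finset.sum_mul_sum]
    simp_rw [expand]
    rw [Finset.sum_comm]
    have inner : ∀ i : Fin k, ∑ x, ∑ i', (B i x * y i) * (B i' x * y i')
        = ∑ i', (y i * y i') * ∑ x, B i x * B i' x := by
      intro i
      rw [Finset.sum_comm]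
      refine Finset.sum_congr rfl fun i' _ => ?_
      rw [Finset.mul_sum]
      exact Finset.sum_congr rfl fun x _ => by ring
    simp_rw [inner, hBB]
    simp only [mul_ite, mul_one, mul_zero, Finset.sum_ite_eq, Finset.mem_univ, if_true]
    rw [hq]
    exact Finset.sum_congr rfl fun i _ => (sq (y i)).symm ▸ (pow_two (y i)).symm
  have hvq : q = ∑ x, v x * (∑ i, B i x * y i) := by
    have : ∀ x : Fin r, v x * (∑ i, B i x * y i) = ∑ i, y i * (B i x * v x) := by
      intro x; rw [Finset.mul_sum]; exact Finset.sum_congr rfl fun i _ => by ring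
    simp_rw [this]
    rw [Finset.sum_comm, hq]
    refine Finset.sum_congr rfl fun i _ => ?_
    rw [sq, ← Finset.mul_sum]
  have cs : q ^ 2 ≤ (∑ x, v x ^ 2) * q := by
    calc q ^ 2 = (∑ x, v x * (∑ i, B i x * y i)) ^ 2 := by rw [← hvq]
      _ ≤ (∑ x, v x ^ 2) * (∑ x, (∑ i, B i x * y i) ^ 2) :=
          Finset.sum_mul_sq_le_sq_mul_sq _ _ _
      _ = (∑ x, v x ^ 2) * q := by rw [key]
  rcases eq_or_lt_of_le hq0 with h | h
  · rw [← h] at *; linarith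
  · have := le_of_mul_le_mul_right (by nlinarith : q * q ≤ (∑ x, v x ^ 2) * q) h
    linarith


lemma bessel {N R : ℕ} (w : Fin R → Fin N → ℝ)
    (horth : ∀ j j' : Fin R, j ≠ j' → ∑ x, w j x * w j' x = 0)
    (hnorm : ∀ j, (∑ x, w j x ^ 2 = 0) ∨ (∑ x, w j x ^ 2 = 1))
    (b : Fin N → ℝ) :
    ∑ j, (∑ x, b x * w j x) ^ 2 ≤ ∑ x, b x ^ 2 := by
  set c : Fin R → ℝ := fun j => ∑ x, b x * w j x with hc
  have czero : ∀ j, (∑ x, w j x ^ 2 = 0) → c j = 0 := by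
    intro j hj
    have hz : ∀ x, w j x = 0 := by
      intro x
      have := (Finset.sum_eq_zero_iff_of_nonneg (fun x _ => sq_nonneg (w j x))).mp hj x
        (Finset.mem_univ x)
      exact pow_eq_zero_iff (n := 2) (by norm_num) |>.mp this
    simp [hc, hz]
  have hpos : 0 ≤ ∑ x, (b x - ∑ j, c j * w j x) ^ 2 :=
    Finset.sum_nonneg fun _ _ => sq_nonneg _
  have expand : ∑ x, (b x - ∑ j, c j * w j x) ^ 2
      = ∑ x, b x ^ 2 - 2 * ∑ j, c j ^ 2
        + ∑ j, ∑ j', c j * c j' * ∑ x, w j x * w j' x := by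
    have e1 : ∀ x, (b x - ∑ j, c j * w j x) ^ 2
        = b x ^ 2 - 2 * ∑ j, c j * (b x * w j x)
          + ∑ j, ∑ j', (c j * c j') * (w j x * w j' x) := by
      intro x
      have e0 : (∑ j, c j * w j x) ^ 2 = ∑ j, ∑ j', (c j * c j') * (w j x * w j' x) := by
        rw [sq, Finset.sum_mul_sum]
        exact Finset.sum_congr rfl fun j _ => Finset.sum_congr rfl fun j' _ => by ring
      have e2 : 2 * b x * ∑ j, c j * w j x = 2 * ∑ j, c j * (b x * w j x) := by
        rw [Finset.mul_sum, Finset.mul_sum]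
        exact Finset.sum_congr rfl fun j _ => by ring
      rw [sub_sq, e0, e2]
    simp_rw [e1]
    rw [Finset.sum_add_distrib, Finset.sum_sub_distrib]
    congr 1
    · congr 1
      rw [← Finset.mul_sum, Finset.sum_comm]
      congr 1
      refine Finset.sum_congr rfl fun j _ => ?_
      rw [← Finset.mul_sum, sq]
    · rw [Finset.sum_comm]
      refine Finset.sum_congr rfl fun j _ => ?_
      rw [Finset.sum_comm]
      refine Finset.sum_congr rfl fun j' _ => ?_
      exact (Finset.mul_sum _ _ _).symm
  have diagsum : ∑ j, ∑ j', c j * c j' * ∑ x, w j x * w j' x = ∑ j, c j ^ 2 := by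
    refine Finset.sum_congr rfl fun j _ => ?_
    rw [Finset.sum_eq_single j (fun j' _ hne => by rw [horth j j' (Ne.symm hne), mul_zero])
      (fun h => absurd (Finset.mem_univ j) h)]
    rcases hnorm j with h | h
    · rw [czero j h]; simp
    · have h1 : ∑ x, w j x * w j x = 1 := by simpa [sq] using h
      rw [h1]; ring
  rw [expand, diagsum] at hpos
  linarith


lemma topk_bound {R k : ℕ} (hkR : k ≤ R) (d : Fin R → ℝ) (hmono : Antitone d)
    (hd0 : ∀ j, 0 ≤ d j) (π : Equiv.Perm (Fin R)) (t : Fin R → ℝ)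
    (ht0 : ∀ j, 0 ≤ t j) (ht1 : ∀ j, t j ≤ 1) (htk : ∑ j, t j ≤ (k : ℝ)) :
    ∑ j, d (π j) * t j ≤ ∑ l : Fin k, d (Fin.castLE hkR l) := by
  classical
  set c : ℝ := if h : k < R then d ⟨k, h⟩ else 0 with hcdef
  have hc0 : 0 ≤ c := by
    rw [hcdef]; split_ifs with h
    · exact hd0 _
    · exact le_refl 0
  have hcle : ∀ j : Fin R, k ≤ j.val → d j ≤ c := by
    intro j hj
    have hkR' : k < R := lt_of_le_of_lt hj j.isLt
    rw [hcdef, dif_pos hkR']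
    exact hmono (by exact_mod_cast hj : (⟨k, hkR'⟩ : Fin R) ≤ j)
  have hcge : ∀ j : Fin R, j.val < k → c ≤ d j := by
    intro j hj
    rw [hcdef]; split_ifs with h
    · exact hmono (le_of_lt (by exact_mod_cast hj : j < (⟨k, h⟩ : Fin R)))
    · exact hd0 _
  have step1 : ∀ j, d (π j) * t j ≤ max (d (π j) - c) 0 + c * t j := by
    intro j
    rcases le_total (d (π j)) c with h | h
    · have h1 : d (π j) * t j ≤ c * t j := mul_le_mul_of_nonneg_right h (ht0 j)
      have h2 : (0:ℝ) ≤ max (d (π j) - c) 0 := le_max_right _ _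
      linarith
    · have h1 : max (d (π j) - c) 0 = d (π j) - c := max_eq_left (by linarith)
      rw [h1]
      nlinarith [ht0 j, ht1 j]
  have sum1 : ∑ j, d (π j) * t j ≤ (∑ j, max (d (π j) - c) 0) + c * ∑ j, t j := by
    rw [Finset.mul_sum, ← Finset.sum_add_distrib]
    exact Finset.sum_le_sum fun j _ => step1 j
  have perm : ∑ j, max (d (π j) - c) 0 = ∑ j, max (d j - c) 0 :=
    Equiv.sum_comp π (fun j => max (d j - c) 0)
  -- pass to ℕ-indexed sums
  set D : ℕ → ℝ := fun j => if h : j < R then d ⟨j, h⟩ else 0 with hD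
  have hDval : ∀ j : Fin R, D j.val = d j := fun j => dif_pos j.isLt
  have hsumD : ∑ j, max (d j - c) 0 = ∑ j ∈ Finset.range R, max (D j - c) 0 := by
    rw [Finset.sum_range fun j => max (D j - c) 0]
    exact Finset.sum_congr rfl fun j _ => by rw [hDval]
  have hsplit : ∑ j ∈ Finset.range R, max (D j - c) 0
      = ∑ j ∈ Finset.range k, max (D j - c) 0 + ∑ j ∈ Finset.Ico k R, max (D j - c) 0 := by
    rw [Finset.range_eq_Ico, ← Finset.sum_Ico_consecutive _ (Nat.zero_le k) hkR,
      Finset.range_eq_Ico]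
  have htail : ∑ j ∈ Finset.Ico k R, max (D j - c) 0 = 0 := by
    refine Finset.sum_eq_zero fun j hj => ?_
    obtain ⟨h1, h2⟩ := Finset.mem_Ico.mp hj
    have : D j ≤ c := by rw [hD]; simp only; rw [dif_pos h2]; exact hcle ⟨j, h2⟩ h1
    exact max_eq_right (by linarith)
  have hhead : ∑ j ∈ Finset.range k, max (D j - c) 0
      = (∑ j ∈ Finset.range k, D j) - k * c := by
    have : ∀ j ∈ Finset.range k, max (D j - c) 0 = D j - c := by
      intro j hj
      have hjk := Finset.mem_range.mp hj
      have hjR : j < R := lt_of_lt_of_le hjk hkR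
      have : c ≤ D j := by rw [hD]; simp only; rw [dif_pos hjR]; exact hcge ⟨j, hjR⟩ hjk
      exact max_eq_left (by linarith)
    rw [Finset.sum_congr rfl this, Finset.sum_sub_distrib, Finset.sum_const,
      Finset.card_range, nsmul_eq_mul]
  have hfinal : ∑ l : Fin k, d (Fin.castLE hkR l) = ∑ j ∈ Finset.range k, D j := by
    rw [Finset.sum_range fun j => D j]
    refine Finset.sum_congr rfl fun l _ => ?_
    rw [hD]; simp only
    rw [dif_pos (lt_of_lt_of_le l.isLt hkR)]
    rfl
  have hct : c * ∑ j, t j ≤ c * k := mul_le_mul_of_nonneg_left htk hc0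
  calc ∑ j, d (π j) * t j ≤ (∑ j, max (d (π j) - c) 0) + c * ∑ j, t j := sum1
    _ = (∑ j ∈ Finset.range k, D j) - k * c + c * ∑ j, t j := by
        rw [perm, hsumD, hsplit, htail, hhead]; ring
    _ ≤ (∑ j ∈ Finset.range k, D j) - k * c + c * k := by linarith
    _ = ∑ j ∈ Finset.range k, D j := by ring
    _ = ∑ l : Fin k, d (Fin.castLE hkR l) := hfinal.symm

lemma frobSq_eq_trace {m n : ℕ} (A : Matrix (Fin m) (Fin n) ℝ) :
    frobSq A = Matrix.trace (A * Aᵀ) := by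
  simp [frobSq, Matrix.trace, Matrix.diag, Matrix.mul_apply, sq]

lemma frob_expand {r₁ r₂ n k : ℕ}
    (Z₁ : Matrix (Fin r₁) (Fin n) ℝ) (Z₂ : Matrix (Fin r₂) (Fin n) ℝ)
    (hZ₁ : Z₁ * Z₁ᵀ = (n:ℝ) • 1) (hZ₂ : Z₂ * Z₂ᵀ = (n:ℝ) • 1)
    (B₁ : Matrix (Fin k) (Fin r₁) ℝ) (B₂ : Matrix (Fin k) (Fin r₂) ℝ)
    (hB₁ : B₁ * B₁ᵀ = 1) (hB₂ : B₂ * B₂ᵀ = 1) :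
    frobSq (B₁ * Z₁ - B₂ * Z₂)
      = 2 * n * k - 2 * Matrix.trace (B₁ * (Z₁ * Z₂ᵀ) * B₂ᵀ) := by
  rw [frobSq_eq_trace]
  have expand : (B₁ * Z₁ - B₂ * Z₂) * (B₁ * Z₁ - B₂ * Z₂)ᵀ
      = B₁ * (Z₁ * Z₁ᵀ) * B₁ᵀ - B₁ * (Z₁ * Z₂ᵀ) * B₂ᵀ
        - B₂ * (Z₂ * Z₁ᵀ) * B₁ᵀ + B₂ * (Z₂ * Z₂ᵀ) * B₂ᵀ := by
    rw [transpose_sub, transpose_mul, transpose_mul, Matrix.sub_mul, Matrix.mul_sub,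
      Matrix.mul_sub]
    simp only [Matrix.mul_assoc]
    abel
  rw [expand]
  have h1 : Matrix.trace (B₁ * (Z₁ * Z₁ᵀ) * B₁ᵀ) = (n : ℝ) * k := by
    rw [hZ₁, Matrix.mul_smul, Matrix.mul_one, Matrix.smul_mul, hB₁, Matrix.trace_smul,
      Matrix.trace_one]
    simp
  have h2 : Matrix.trace (B₂ * (Z₂ * Z₂ᵀ) * B₂ᵀ) = (n : ℝ) * k := by
    rw [hZ₂, Matrix.mul_smul, Matrix.mul_one, Matrix.smul_mul, hB₂, Matrix.trace_smul,
      Matrix.trace_one]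
    simp
  have h3 : Matrix.trace (B₂ * (Z₂ * Z₁ᵀ) * B₁ᵀ) = Matrix.trace (B₁ * (Z₁ * Z₂ᵀ) * B₂ᵀ) := by
    have : B₂ * (Z₂ * Z₁ᵀ) * B₁ᵀ = (B₁ * (Z₁ * Z₂ᵀ) * B₂ᵀ)ᵀ := by
      simp [Matrix.transpose_mul, Matrix.mul_assoc]
    rw [this, Matrix.trace_transpose]
  rw [Matrix.trace_add, Matrix.trace_sub, Matrix.trace_sub, h1, h2, h3]
  ring


lemma traceTM {a b : ℕ} (A B : Matrix (Fin a) (Fin b) ℝ) :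
    Matrix.trace (Aᵀ * B) = ∑ j, ∑ i, A i j * B i j := by
  rw [Matrix.trace]
  refine Finset.sum_congr rfl fun j _ => ?_
  rw [Matrix.diag, Matrix.mul_apply]
  exact Finset.sum_congr rfl fun i _ => rfl

lemma trace_le_sum_sv {r₁ r₂ k : ℕ} (hk2 : k ≤ r₂)
    (M : Matrix (Fin r₁) (Fin r₂) ℝ)
    (B₁ : Matrix (Fin k) (Fin r₁) ℝ) (B₂ : Matrix (Fin k) (Fin r₂) ℝ)
    (hB₁ : B₁ * B₁ᵀ = 1) (hB₂ : B₂ * B₂ᵀ = 1) :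
    Matrix.trace (B₁ * M * B₂ᵀ) ≤ ∑ l : Fin k, svDesc M (Fin.castLE hk2 l) := by
  classical
  set hH := Matrix.isHermitian_conjTranspose_mul_self M with hHdef
  set μ : Fin r₂ → ℝ := hH.eigenvalues with hμdef
  have hμ0 : ∀ j, 0 ≤ μ j := fun j =>
    (Matrix.posSemidef_conjTranspose_mul_self M).eigenvalues_nonneg j
  set U : Matrix (Fin r₂) (Fin r₂) ℝ := (hH.eigenvectorUnitary : Matrix (Fin r₂) (Fin r₂) ℝ)
    with hUdef
  have hstar : star U = Uᵀ := by
    rw [Matrix.star_eq_conjTranspose, Matrix.conjTranspose_eq_transpose_of_trivial]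
  have hU1 : Uᵀ * U = 1 := by
    rw [← hstar]
    exact Matrix.mem_unitaryGroup_iff'.mp hH.eigenvectorUnitary.2
  have hU2 : U * Uᵀ = 1 := by
    rw [← hstar]
    exact Matrix.mem_unitaryGroup_iff.mp hH.eigenvectorUnitary.2
  have hMT : Mᴴ = Mᵀ := Matrix.conjTranspose_eq_transpose_of_trivial M
  have hdiag : (M * U)ᵀ * (M * U) = Matrix.diagonal μ := by
    calc (M * U)ᵀ * (M * U) = star U * (Mᴴ * M) * U := by
          rw [hstar, hMT, transpose_mul]
          simp only [Matrix.mul_assoc]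
      _ = Matrix.diagonal (RCLike.ofReal ∘ hH.eigenvalues) := by
          rw [← hH.conjStarAlgAut_star_eigenvectorUnitary, Unitary.conjStarAlgAut_star_apply]
      _ = Matrix.diagonal μ := by
          rw [hμdef]
          simp [RCLike.ofReal_real_eq_id, Function.id_comp]
  have hGram : ∀ j j' : Fin r₂,
      (∑ x, (M * U) x j * (M * U) x j') = if j = j' then μ j else 0 := by
    intro j j'
    have h2 : ((M * U)ᵀ * (M * U)) j j' = ∑ x, (M * U) x j * (M * U) x j' := by
      rw [Matrix.mul_apply]
      exact Finset.sum_congr rfl fun x _ => rfl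
    rw [← h2, hdiag, Matrix.diagonal_apply]
  have hUcol : ∀ j, (∑ x, (U x j) ^ 2) = 1 := by
    intro j
    have h2 : (Uᵀ * U) j j = ∑ x, (U x j) ^ 2 := by
      rw [Matrix.mul_apply]
      exact Finset.sum_congr rfl fun x _ => (sq (U x j)).symm
    rw [← h2, hU1, Matrix.one_apply_eq]
  -- abbreviations
  set s : Fin r₂ → ℝ := fun j => Real.sqrt (μ j) with hsdef
  set α : Fin r₂ → ℝ := fun j => ∑ i, ((B₂ * U) i j) ^ 2 with hαdef
  set β : Fin r₂ → ℝ := fun j => ∑ i, ((B₁ * (M * U)) i j) ^ 2 with hβdef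
  have hsj : ∀ j, s j = Real.sqrt (μ j) := fun _ => rfl
  have hαj : ∀ j, α j = ∑ i, ((B₂ * U) i j) ^ 2 := fun _ => rfl
  have hβj : ∀ j, β j = ∑ i, ((B₁ * (M * U)) i j) ^ 2 := fun _ => rfl
  have hα0 : ∀ j, 0 ≤ α j := fun j => Finset.sum_nonneg fun _ _ => sq_nonneg _
  have hβ0 : ∀ j, 0 ≤ β j := fun j => Finset.sum_nonneg fun _ _ => sq_nonneg _
  have hα1 : ∀ j, α j ≤ 1 := by
    intro j
    have h := contract_sq B₂ hB₂ (fun x => U x j)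
    rw [hUcol j] at h
    calc α j = ∑ i, (∑ x, B₂ i x * U x j) ^ 2 := by
          rw [hαj]
          exact Finset.sum_congr rfl fun i _ => by rw [Matrix.mul_apply]
      _ ≤ 1 := h
  have hβμ : ∀ j, β j ≤ μ j := by
    intro j
    have h := contract_sq B₁ hB₁ (fun x => (M * U) x j)
    have h2 : ∑ x, ((M * U) x j) ^ 2 = μ j := by
      have h3 := hGram j j
      rw [if_pos rfl] at h3
      rw [← h3]
      exact Finset.sum_congr rfl fun x _ => sq ((M * U) x j)
    rw [h2] at h
    calc β j = ∑ i, (∑ x, B₁ i x * (M * U) x j) ^ 2 := by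
          rw [hβj]
          exact Finset.sum_congr rfl fun i _ => by rw [Matrix.mul_apply]
      _ ≤ μ j := h
  have hαsum : ∑ j, α j = (k : ℝ) := by
    have hmat : (B₂ * U) * ((B₂ * U)ᵀ) = B₂ * B₂ᵀ := by
      rw [transpose_mul]
      calc B₂ * U * (Uᵀ * B₂ᵀ) = B₂ * (U * (Uᵀ * B₂ᵀ)) := by simp only [Matrix.mul_assoc]
        _ = B₂ * B₂ᵀ := by rw [← Matrix.mul_assoc U Uᵀ B₂ᵀ, hU2, Matrix.one_mul]
    calc ∑ j, α j = Matrix.trace ((B₂ * U)ᵀ * (B₂ * U)) := by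
          rw [traceTM]
          exact Finset.sum_congr rfl fun j _ =>
            Finset.sum_congr rfl fun i _ => sq ((B₂ * U) i j)
      _ = Matrix.trace ((B₂ * U) * ((B₂ * U)ᵀ)) := Matrix.trace_mul_comm _ _
      _ = Matrix.trace (B₂ * B₂ᵀ) := by rw [hmat]
      _ = (k : ℝ) := by rw [hB₂, Matrix.trace_one]; simp
  have hT : Matrix.trace (B₁ * M * B₂ᵀ) = ∑ j, ∑ i, (B₂ * U) i j * (B₁ * (M * U)) i j := by
    have hmat : (B₁ * (M * U)) * ((B₂ * U)ᵀ) = B₁ * M * B₂ᵀ := by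
      rw [transpose_mul]
      calc B₁ * (M * U) * (Uᵀ * B₂ᵀ) = B₁ * (M * (U * (Uᵀ * B₂ᵀ))) := by
            simp only [Matrix.mul_assoc]
        _ = B₁ * (M * B₂ᵀ) := by rw [← Matrix.mul_assoc U Uᵀ B₂ᵀ, hU2, Matrix.one_mul]
        _ = B₁ * M * B₂ᵀ := by rw [Matrix.mul_assoc]
    calc Matrix.trace (B₁ * M * B₂ᵀ)
        = Matrix.trace ((B₁ * (M * U)) * ((B₂ * U)ᵀ)) := by rw [hmat]
      _ = Matrix.trace ((B₂ * U)ᵀ * (B₁ * (M * U))) := Matrix.trace_mul_comm _ _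
      _ = ∑ j, ∑ i, (B₂ * U) i j * (B₁ * (M * U)) i j := traceTM _ _
  -- the weights t
  set t : Fin r₂ → ℝ := fun j =>
    Real.sqrt (α j) * (if μ j = 0 then 0 else Real.sqrt (β j) / s j) with htdef
  have htj : ∀ j, t j = Real.sqrt (α j) * (if μ j = 0 then 0 else Real.sqrt (β j) / s j) :=
    fun _ => rfl
  have ht0 : ∀ j, 0 ≤ t j := by
    intro j
    rw [htj]
    apply mul_nonneg (Real.sqrt_nonneg _)
    split_ifs with h
    · exact le_refl 0
    · exact div_nonneg (Real.sqrt_nonneg _) (Real.sqrt_nonneg _)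
  have ht1 : ∀ j, t j ≤ 1 := by
    intro j
    rw [htj]
    have h1 : Real.sqrt (α j) ≤ 1 := by
      rw [show (1:ℝ) = Real.sqrt 1 by simp]
      exact Real.sqrt_le_sqrt (hα1 j)
    have h2 : (if μ j = 0 then (0:ℝ) else Real.sqrt (β j) / s j) ≤ 1 := by
      split_ifs with h
      · norm_num
      · have hμpos : 0 < μ j := lt_of_le_of_ne (hμ0 j) (Ne.symm h)
        have hspos : 0 < s j := Real.sqrt_pos.mpr hμpos
        rw [div_le_one hspos, hsj]
        exact Real.sqrt_le_sqrt (hβμ j)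
    have h2' : (0:ℝ) ≤ (if μ j = 0 then (0:ℝ) else Real.sqrt (β j) / s j) := by
      split_ifs with h
      · exact le_refl 0
      · exact div_nonneg (Real.sqrt_nonneg _) (Real.sqrt_nonneg _)
    exact mul_le_one₀ h1 h2' h2
  have hterm : ∀ j, (∑ i, (B₂ * U) i j * (B₁ * (M * U)) i j) ≤ s j * t j := by
    intro j
    have hcs : ∑ i, (B₂ * U) i j * (B₁ * (M * U)) i j
        ≤ Real.sqrt (α j) * Real.sqrt (β j) := csqrt _ _
    by_cases hμz : μ j = 0
    · have hβz : β j = 0 := le_antisymm (hμz ▸ hβμ j) (hβ0 j)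
      have hz : Real.sqrt (α j) * Real.sqrt (β j) = 0 := by rw [hβz]; simp
      rw [htj, if_pos hμz, mul_zero, mul_zero]
      linarith
    · have hμpos : 0 < μ j := lt_of_le_of_ne (hμ0 j) (Ne.symm hμz)
      have hspos : 0 < s j := Real.sqrt_pos.mpr hμpos
      have heq : s j * t j = Real.sqrt (α j) * Real.sqrt (β j) := by
        rw [htj, if_neg hμz]
        field_simp
      linarith
  -- Bessel bound
  have hbessel : ∑ j, (if μ j = 0 then (0:ℝ) else β j / μ j) ≤ (k : ℝ) := by
    set w : Fin r₂ → Fin r₁ → ℝ :=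
      fun j x => if μ j = 0 then 0 else (M * U) x j / s j with hwdef
    have hwj : ∀ j x, w j x = if μ j = 0 then 0 else (M * U) x j / s j := fun _ _ => rfl
    have horth : ∀ j j' : Fin r₂, j ≠ j' → ∑ x, w j x * w j' x = 0 := by
      intro j j' hne
      by_cases h1 : μ j = 0
      · refine Finset.sum_eq_zero fun x _ => ?_
        rw [hwj j x, if_pos h1, zero_mul]
      · by_cases h2 : μ j' = 0
        · refine Finset.sum_eq_zero fun x _ => ?_
          rw [hwj j' x, if_pos h2, mul_zero]
        · have he : ∀ x, w j x * w j' x = ((M * U) x j * (M * U) x j') / (s j * s j') := by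
            intro x
            rw [hwj, hwj, if_neg h1, if_neg h2]
            ring
          calc ∑ x, w j x * w j' x
              = ∑ x, ((M * U) x j * (M * U) x j') / (s j * s j') :=
                Finset.sum_congr rfl fun x _ => he x
            _ = (∑ x, (M * U) x j * (M * U) x j') / (s j * s j') := by
                rw [Finset.sum_div]
            _ = 0 := by rw [hGram j j', if_neg hne, zero_div]
    have hnorm : ∀ j, (∑ x, w j x ^ 2 = 0) ∨ (∑ x, w j x ^ 2 = 1) := by
      intro j
      by_cases h1 : μ j = 0
      · left
        refine Finset.sum_eq_zero fun x _ => ?_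
        rw [hwj j x, if_pos h1]
        norm_num
      · right
        have hμpos : 0 < μ j := lt_of_le_of_ne (hμ0 j) (Ne.symm h1)
        have hsq : s j ^ 2 = μ j := Real.sq_sqrt (hμ0 j)
        have he : ∀ x, w j x ^ 2 = ((M * U) x j * (M * U) x j) / μ j := by
          intro x
          rw [hwj, if_neg h1, div_pow, hsq, sq]
        calc ∑ x, w j x ^ 2 = ∑ x, ((M * U) x j * (M * U) x j) / μ j :=
              Finset.sum_congr rfl fun x _ => he x
          _ = (∑ x, (M * U) x j * (M * U) x j) / μ j := by rw [Finset.sum_div]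
          _ = 1 := by rw [hGram j j, if_pos rfl, div_self (ne_of_gt hμpos)]
    have hrow : ∀ i : Fin k, ∑ j, (∑ x, B₁ i x * w j x) ^ 2 ≤ ∑ x, (B₁ i x) ^ 2 :=
      fun i => bessel w horth hnorm (B₁ i)
    have hrowval : ∀ (i : Fin k) (j : Fin r₂),
        (∑ x, B₁ i x * w j x) = if μ j = 0 then 0 else (B₁ * (M * U)) i j / s j := by
      intro i j
      by_cases h1 : μ j = 0
      · rw [if_pos h1]
        refine Finset.sum_eq_zero fun x _ => ?_
        rw [hwj j x, if_pos h1, mul_zero]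
      · rw [if_neg h1, Matrix.mul_apply, Finset.sum_div]
        refine Finset.sum_congr rfl fun x _ => ?_
        rw [hwj j x, if_neg h1]
        ring
    have hswap : ∑ j, (if μ j = 0 then (0:ℝ) else β j / μ j)
        = ∑ i, ∑ j, (∑ x, B₁ i x * w j x) ^ 2 := by
      rw [Finset.sum_comm]
      refine Finset.sum_congr rfl fun j _ => ?_
      by_cases h1 : μ j = 0
      · rw [if_pos h1]
        refine (Finset.sum_eq_zero fun i _ => ?_).symm
        rw [hrowval i j, if_pos h1]
        norm_num
      · rw [if_neg h1]
        have hsq : s j ^ 2 = μ j := Real.sq_sqrt (hμ0 j)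
        have he : ∀ i : Fin k, (∑ x, B₁ i x * w j x) ^ 2 = ((B₁ * (M * U)) i j) ^ 2 / μ j := by
          intro i
          rw [hrowval i j, if_neg h1, div_pow, hsq]
        calc β j / μ j = (∑ i, ((B₁ * (M * U)) i j) ^ 2) / μ j := by rw [hβj]
          _ = ∑ i, ((B₁ * (M * U)) i j) ^ 2 / μ j := by rw [Finset.sum_div]
          _ = ∑ i, (∑ x, B₁ i x * w j x) ^ 2 :=
              Finset.sum_congr rfl fun i _ => (he i).symm
    have hB₁sum : ∑ i : Fin k, ∑ x, (B₁ i x) ^ 2 = (k : ℝ) := by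
      calc ∑ i : Fin k, ∑ x, (B₁ i x) ^ 2
          = ∑ j : Fin k, ∑ x : Fin r₁, B₁ᵀ x j * B₁ᵀ x j := by
            refine Finset.sum_congr rfl fun i _ => Finset.sum_congr rfl fun x _ => ?_
            rw [Matrix.transpose_apply, sq]
        _ = Matrix.trace ((B₁ᵀ)ᵀ * B₁ᵀ) := (traceTM _ _).symm
        _ = Matrix.trace (B₁ * B₁ᵀ) := by rw [transpose_transpose]
        _ = (k : ℝ) := by rw [hB₁, Matrix.trace_one]; simp
    calc ∑ j, (if μ j = 0 then (0:ℝ) else β j / μ j)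
        = ∑ i, ∑ j, (∑ x, B₁ i x * w j x) ^ 2 := hswap
      _ ≤ ∑ i : Fin k, ∑ x, (B₁ i x) ^ 2 := Finset.sum_le_sum fun i _ => hrow i
      _ = (k : ℝ) := hB₁sum
  have htk : ∑ j, t j ≤ (k : ℝ) := by
    have hbd : ∀ j, t j ≤ (α j + (if μ j = 0 then (0:ℝ) else β j / μ j)) / 2 := by
      intro j
      by_cases h1 : μ j = 0
      · rw [htj, if_pos h1, if_pos h1, mul_zero]
        linarith [hα0 j]
      · rw [htj, if_neg h1, if_neg h1]
        have hμpos : 0 < μ j := lt_of_le_of_ne (hμ0 j) (Ne.symm h1)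
        have hsq : s j ^ 2 = μ j := Real.sq_sqrt (hμ0 j)
        have ha : (Real.sqrt (α j)) ^ 2 = α j := Real.sq_sqrt (hα0 j)
        have hb : (Real.sqrt (β j) / s j) ^ 2 = β j / μ j := by
          rw [div_pow, hsq, Real.sq_sqrt (hβ0 j)]
        nlinarith [sq_nonneg (Real.sqrt (α j) - Real.sqrt (β j) / s j)]
    calc ∑ j, t j ≤ ∑ j, (α j + (if μ j = 0 then (0:ℝ) else β j / μ j)) / 2 :=
          Finset.sum_le_sum fun j _ => hbd j
      _ = ((∑ j, α j) + ∑ j, (if μ j = 0 then (0:ℝ) else β j / μ j)) / 2 := by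
          rw [← Finset.sum_div, ← Finset.sum_add_distrib]
      _ ≤ ((k : ℝ) + (k : ℝ)) / 2 := by
          have h1 := hαsum
          linarith [hbessel]
      _ = (k : ℝ) := by ring
  -- final assembly
  set d : Fin r₂ → ℝ := fun l => Real.sqrt (μ (Tuple.sort μ l.rev)) with hddef
  have hd_anti : Antitone d := by
    intro l l' hle
    exact Real.sqrt_le_sqrt (Tuple.monotone_sort μ (Fin.rev_le_rev.mpr hle))
  have hd0 : ∀ j, 0 ≤ d j := fun j => Real.sqrt_nonneg _
  set π : Equiv.Perm (Fin r₂) := Fin.revPerm.trans (Tuple.sort μ) with hπdef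
  have hdπ : ∀ j, d (π.symm j) = s j := by
    intro j
    have h1 : π (π.symm j) = j := Equiv.apply_symm_apply π j
    calc d (π.symm j) = Real.sqrt (μ (π (π.symm j))) := rfl
      _ = Real.sqrt (μ j) := by rw [h1]
      _ = s j := (hsj j).symm
  have hsv : ∀ l : Fin k, svDesc M (Fin.castLE hk2 l) = d (Fin.castLE hk2 l) := fun l => rfl
  calc Matrix.trace (B₁ * M * B₂ᵀ)
      = ∑ j, ∑ i, (B₂ * U) i j * (B₁ * (M * U)) i j := hT
    _ ≤ ∑ j, s j * t j := Finset.sum_le_sum fun j _ => hterm j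
    _ = ∑ j, d (π.symm j) * t j := by
        refine Finset.sum_congr rfl fun j _ => ?_
        rw [hdπ j]
    _ ≤ ∑ l : Fin k, d (Fin.castLE hk2 l) :=
        topk_bound hk2 d hd_anti hd0 π.symm t ht0 ht1 htk
    _ = ∑ l : Fin k, svDesc M (Fin.castLE hk2 l) := by
        exact Finset.sum_congr rfl fun l _ => (hsv l).symm


end Helpers

/-- Suppose `ZᵢZᵢᵀ = n Iᵣᵢ` and `k ≤ min{r₁, r₂}`. Let `W₁ Σ W₂ᵀ` be any
`k`-truncated singular value decomposition of `Z₁Z₂ᵀ`: `W₁ ∈ ℝ^{r₁×k}` and `W₂ ∈ ℝ^{r₂×k}`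
have orthonormal columns which are leading singular-vector pairs of `M := Z₁Z₂ᵀ`, i.e.
`M W₂ = W₁ Σ` and `Mᵀ W₁ = W₂ Σ` where `Σ` is the diagonal matrix of the `k` largest singular
values of `M` in decreasing order. Then `(B₁, B₂) = (W₁ᵀ, W₂ᵀ)` is feasible and minimizes
`‖B₁Z₁ - B₂Z₂‖_F²` over all pairs with `BᵢBᵢᵀ = I_k`. -/
theorem projection_procrustes_solution (r₁ r₂ n k : ℕ)
    (hr₁ : 0 < r₁) (hr₂ : 0 < r₂) (hn : 0 < n) (hk0 : 0 < k) (hk : k ≤ min r₁ r₂)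
    (Z₁ : Matrix (Fin r₁) (Fin n) ℝ) (Z₂ : Matrix (Fin r₂) (Fin n) ℝ)
    (hZ₁ : Z₁ * Z₁ᵀ = (n : ℝ) • 1) (hZ₂ : Z₂ * Z₂ᵀ = (n : ℝ) • 1)
    (W₁ : Matrix (Fin r₁) (Fin k) ℝ) (W₂ : Matrix (Fin r₂) (Fin k) ℝ)
    (S : Matrix (Fin k) (Fin k) ℝ)
    (hW₁ : W₁ᵀ * W₁ = 1) (hW₂ : W₂ᵀ * W₂ = 1)
    (hS : S = Matrix.diagonal (fun l : Fin k =>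
      svDesc (Z₁ * Z₂ᵀ) (Fin.castLE (le_trans hk (min_le_right r₁ r₂)) l)))
    (hMW₂ : (Z₁ * Z₂ᵀ) * W₂ = W₁ * S)
    (hMW₁ : (Z₁ * Z₂ᵀ)ᵀ * W₁ = W₂ * S) :
    (W₁ᵀ * (W₁ᵀ)ᵀ = 1 ∧ W₂ᵀ * (W₂ᵀ)ᵀ = 1) ∧
      ∀ (B₁ : Matrix (Fin k) (Fin r₁) ℝ) (B₂ : Matrix (Fin k) (Fin r₂) ℝ),
        B₁ * B₁ᵀ = 1 → B₂ * B₂ᵀ = 1 →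
        frobSq (W₁ᵀ * Z₁ - W₂ᵀ * Z₂) ≤ frobSq (B₁ * Z₁ - B₂ * Z₂) := by
  have hk2 : k ≤ r₂ := le_trans hk (min_le_right r₁ r₂)
  have hWfeas₁ : W₁ᵀ * (W₁ᵀ)ᵀ = 1 := by rw [transpose_transpose]; exact hW₁
  have hWfeas₂ : W₂ᵀ * (W₂ᵀ)ᵀ = 1 := by rw [transpose_transpose]; exact hW₂
  refine ⟨⟨hWfeas₁, hWfeas₂⟩, ?_⟩
  intro B₁ B₂ hB₁ hB₂
  rw [frob_expand Z₁ Z₂ hZ₁ hZ₂ (W₁ᵀ) (W₂ᵀ) hWfeas₁ hWfeas₂,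
    frob_expand Z₁ Z₂ hZ₁ hZ₂ B₁ B₂ hB₁ hB₂]
  have hW : Matrix.trace (W₁ᵀ * (Z₁ * Z₂ᵀ) * (W₂ᵀ)ᵀ)
      = ∑ l : Fin k, svDesc (Z₁ * Z₂ᵀ) (Fin.castLE hk2 l) := by
    rw [transpose_transpose]
    have hSS : W₁ᵀ * (Z₁ * Z₂ᵀ) * W₂ = S := by
      rw [Matrix.mul_assoc, hMW₂, ← Matrix.mul_assoc, hW₁, Matrix.one_mul]
    rw [hSS, hS, Matrix.trace_diagonal]
  have hB : Matrix.trace (B₁ * (Z₁ * Z₂ᵀ) * B₂ᵀ)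
      ≤ ∑ l : Fin k, svDesc (Z₁ * Z₂ᵀ) (Fin.castLE hk2 l) :=
    trace_le_sum_sv hk2 _ B₁ B₂ hB₁ hB₂
  rw [hW]
  linarith [hB]
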